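/- arXiv:1409.0410 — 3 statements merged into one kernel-verified Lean document; each statement's English description precedes it below -/
import Mathlib

section
/- Let p be a prime and A a commutative p-Boolean 𝔽_p-algebra (a^p = a for all a ∈ A). Then: (i) for every prime ideal 𝔭 of A, the canonical ring homomorphism 𝔽_p → A/𝔭 is bijective; and (ii) the resulting canonical 𝔽_p-algebra homomorphism from A to the algebra C(Spec A, 𝔽_p) of continuous 𝔽_p-valued functions on the prime spectrum of A — sending a ∈ A to the function 𝔭 ↦ (the element of 𝔽_p corresponding under (i) to the residue class of a in A/𝔭) — is an isomorphism of 𝔽_p-algebras. Here Spec A = PrimeSpectrum A carries the Zariski topology and 𝔽_p the discrete topology. (The duality for p-Boolean algebras quoted in Appendix C.4 of the paper: a p-Boolean algebra A is isomorphic to the algebra of continuous 𝔽_p-valued maps on Spec(A).) -/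
open Polynomial

lemma myProdXsubC (p : ℕ) [Fact p.Prime] :
    (∏ c : ZMod p, (X - C c) : (ZMod p)[X]) = X ^ p - X := by
  have hp : 1 < p := (Fact.out : p.Prime).one_lt
  have hq : Fintype.card (ZMod p) = p := ZMod.card p
  have hmonic : (X ^ p - X : (ZMod p)[X]).Monic :=
    monic_X_pow_sub (by simpa [degree_X] using (by exact_mod_cast hp : (1 : WithBot ℕ) < p))
  have hroots : (X ^ p - X : (ZMod p)[X]).roots = Finset.univ.val := by
    have := FiniteField.roots_X_pow_card_sub_X (ZMod p)
    rwa [hq] at this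
  have hcard : (X ^ p - X : (ZMod p)[X]).roots.card = (X ^ p - X : (ZMod p)[X]).natDegree := by
    rw [hroots, FiniteField.X_pow_card_sub_X_natDegree_eq _ hp]
    simpa using hq
  have := prod_multiset_X_sub_C_of_monic_of_roots_card_eq hmonic hcard
  rw [hroots] at this
  rw [← this]
  rfl

lemma myProd (p : ℕ) [Fact p.Prime] {R : Type*} [CommRing R] [Algebra (ZMod p) R] (x : R) :
    ∏ c : ZMod p, (x - algebraMap (ZMod p) R c) = x ^ p - x := by
  have := congrArg (aeval x) (myProdXsubC p)
  simpa using this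

lemma myPowIter {A : Type*} [CommRing A] (p : ℕ) (hA : ∀ a : A, a ^ p = a)
    (a : A) (k : ℕ) : a ^ p ^ k = a := by
  induction k with
  | zero => simp
  | succ k ih => rw [pow_succ, pow_mul, ih, hA]

/-- **duality for p-Boolean algebras.** Let `p` be a prime and `A` a
commutative p-Boolean `𝔽_p`-algebra (`a^p = a` for all `a`). Then: (i) for every prime
ideal `𝔭` of `A`, the canonical ring homomorphism `𝔽_p → A/𝔭` is bijective; and (ii) the
canonical `𝔽_p`-algebra homomorphism from `A` to the algebra `C(Spec A, 𝔽_p)` of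
continuous `𝔽_p`-valued functions on the prime spectrum of `A` — sending `a ∈ A` to the
function `𝔭 ↦` (the element of `𝔽_p` corresponding under (i) to the residue class of `a`
in `A/𝔭`) — is an isomorphism of `𝔽_p`-algebras. Here `Spec A` carries the Zariski
topology and `𝔽_p` the discrete topology. -/
theorem pBoolean_equiv_continuous_functions (p : ℕ) [Fact p.Prime]
    [TopologicalSpace (ZMod p)] [DiscreteTopology (ZMod p)]
    (A : Type*) [CommRing A] [Algebra (ZMod p) A] (hA : ∀ a : A, a ^ p = a) :
    (∀ 𝔭 : PrimeSpectrum A,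
        Function.Bijective (algebraMap (ZMod p) (A ⧸ 𝔭.asIdeal))) ∧
      ∃ Φ : A ≃ₐ[ZMod p] C(PrimeSpectrum A, ZMod p),
        ∀ (a : A) (𝔭 : PrimeSpectrum A),
          algebraMap (ZMod p) (A ⧸ 𝔭.asIdeal) (Φ a 𝔭) =
            Ideal.Quotient.mk 𝔭.asIdeal a := by
  have hp1 : 1 < p := (Fact.out : p.Prime).one_lt
  -- every element of a quotient satisfies x^p = x
  have hQ : ∀ (𝔭 : PrimeSpectrum A) (x : A ⧸ 𝔭.asIdeal), x ^ p = x := by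
    intro 𝔭 x
    obtain ⟨a, rfl⟩ := Ideal.Quotient.mk_surjective x
    rw [← map_pow, hA]
  have hbij : ∀ 𝔭 : PrimeSpectrum A,
      Function.Bijective (algebraMap (ZMod p) (A ⧸ 𝔭.asIdeal)) := by
    intro 𝔭
    haveI : 𝔭.asIdeal.IsPrime := 𝔭.isPrime
    refine ⟨(algebraMap (ZMod p) (A ⧸ 𝔭.asIdeal)).injective, ?_⟩
    intro x
    have h0 : ∏ c : ZMod p, (x - algebraMap (ZMod p) _ c) = 0 := by
      rw [myProd, hQ, sub_self]
    obtain ⟨c, -, hc⟩ := Finset.prod_eq_zero_iff.mp h0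
    exact ⟨c, (sub_eq_zero.mp hc).symm⟩
  refine ⟨hbij, ?_⟩
  -- the ring equivalences
  set ψ : ∀ 𝔭 : PrimeSpectrum A, ZMod p ≃+* A ⧸ 𝔭.asIdeal :=
    fun 𝔭 => RingEquiv.ofBijective _ (hbij 𝔭) with hψ
  have hψa : ∀ (𝔭 : PrimeSpectrum A) (c : ZMod p),
      ψ 𝔭 c = algebraMap (ZMod p) (A ⧸ 𝔭.asIdeal) c := fun _ _ => rfl
  -- the underlying function
  set F : A → PrimeSpectrum A → ZMod p :=
    fun a 𝔭 => (ψ 𝔭).symm (Ideal.Quotient.mk 𝔭.asIdeal a) with hF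
  have halg : ∀ (𝔭 : PrimeSpectrum A) (c : ZMod p),
      algebraMap (ZMod p) (A ⧸ 𝔭.asIdeal) c =
        Ideal.Quotient.mk 𝔭.asIdeal (algebraMap (ZMod p) A c) := by
    intro 𝔭 c
    rw [IsScalarTower.algebraMap_apply (ZMod p) A (A ⧸ 𝔭.asIdeal),
      Ideal.Quotient.algebraMap_eq]
  have hFkey : ∀ (a : A) (𝔭 : PrimeSpectrum A) (c : ZMod p),
      F a 𝔭 = c ↔ a - algebraMap (ZMod p) A c ∈ 𝔭.asIdeal := by
    intro a 𝔭 c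
    have key : Ideal.Quotient.mk 𝔭.asIdeal a = algebraMap (ZMod p) (A ⧸ 𝔭.asIdeal) c ↔
        a - algebraMap (ZMod p) A c ∈ 𝔭.asIdeal := by
      rw [halg, Ideal.Quotient.mk_eq_mk_iff_sub_mem]
    rw [← key]
    constructor
    · intro h
      have h' : (ψ 𝔭).symm (Ideal.Quotient.mk 𝔭.asIdeal a) = c := h
      rw [← hψa, ← h', RingEquiv.apply_symm_apply]
    · intro h
      show (ψ 𝔭).symm (Ideal.Quotient.mk 𝔭.asIdeal a) = c
      rw [h, ← hψa, RingEquiv.symm_apply_apply]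
  -- continuity
  have hcont : ∀ a : A, Continuous (F a) := by
    intro a
    apply IsLocallyConstant.continuous
    rw [IsLocallyConstant.iff_isOpen_fiber]
    intro c
    set b : A := a - algebraMap (ZMod p) A c with hb
    show IsOpen {𝔭 : PrimeSpectrum A | F a 𝔭 = c}
    have hset : {𝔭 : PrimeSpectrum A | F a 𝔭 = c} =
        ↑(PrimeSpectrum.basicOpen (b ^ (p - 1) - 1)) := by
      ext 𝔭
      haveI : 𝔭.asIdeal.IsPrime := 𝔭.isPrime
      simp only [Set.mem_setOf_eq, hFkey, PrimeSpectrum.basicOpen,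
        Set.mem_setOf_eq, TopologicalSpace.Opens.coe_mk, PrimeSpectrum.mem_basicOpen]
      have hprod : Ideal.Quotient.mk 𝔭.asIdeal b *
          (Ideal.Quotient.mk 𝔭.asIdeal (b ^ (p - 1) - 1)) = 0 := by
        have hpp : p - 1 + 1 = p := by omega
        have hbb : b * (b ^ (p - 1) - 1) = b ^ p - b := by
          rw [mul_sub, mul_one, ← pow_succ', hpp]
        rw [← map_mul, hbb, map_sub, map_pow, hQ 𝔭, sub_self]
      constructor
      · intro h hmem
        have h1 : (1 : A) ∈ 𝔭.asIdeal := by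
          have hb1 : b ^ (p - 1) ∈ 𝔭.asIdeal :=
            Ideal.pow_mem_of_mem _ h _ (by omega)
          have := 𝔭.asIdeal.sub_mem hb1 hmem
          simpa using this
        exact 𝔭.isPrime.ne_top (𝔭.asIdeal.eq_top_iff_one.mpr h1)
      · intro h
        rcases mul_eq_zero.mp hprod with h' | h'
        · exact Ideal.Quotient.eq_zero_iff_mem.mp h'
        · exact absurd (Ideal.Quotient.eq_zero_iff_mem.mp h') h
    rw [hset]
    exact (PrimeSpectrum.basicOpen _).isOpen
  -- the algebra homomorphism
  let Φ₀ : A →ₐ[ZMod p] C(PrimeSpectrum A, ZMod p) :=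
  { toFun := fun a => ⟨F a, hcont a⟩
    map_one' := by
      ext 𝔭
      show (ψ 𝔭).symm (Ideal.Quotient.mk 𝔭.asIdeal 1) = 1
      rw [map_one, map_one]
    map_mul' := fun a b => by
      ext 𝔭
      show (ψ 𝔭).symm (Ideal.Quotient.mk 𝔭.asIdeal (a * b)) = _
      rw [map_mul, map_mul]
      rfl
    map_zero' := by
      ext 𝔭
      show (ψ 𝔭).symm (Ideal.Quotient.mk 𝔭.asIdeal 0) = 0
      rw [map_zero, map_zero]
    map_add' := fun a b => by
      ext 𝔭
      show (ψ 𝔭).symm (Ideal.Quotient.mk 𝔭.asIdeal (a + b)) = _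
      rw [map_add, map_add]
      rfl
    commutes' := fun c => by
      ext 𝔭
      show (ψ 𝔭).symm (Ideal.Quotient.mk 𝔭.asIdeal (algebraMap (ZMod p) A c)) = _
      rw [← Ideal.Quotient.algebraMap_eq,
        ← IsScalarTower.algebraMap_apply (ZMod p) A (A ⧸ 𝔭.asIdeal), ← hψa,
        RingEquiv.symm_apply_apply]
      rfl }
  have hΦ₀ : ∀ (a : A) (𝔭 : PrimeSpectrum A), Φ₀ a 𝔭 = F a 𝔭 := fun _ _ => rfl
  have hinj : Function.Injective Φ₀ := by
    rw [injective_iff_map_eq_zero]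
    intro a ha
    have hmem : ∀ 𝔭 : PrimeSpectrum A, a ∈ 𝔭.asIdeal := by
      intro 𝔭
      have h0 : F a 𝔭 = 0 := by
        rw [← hΦ₀, ha]; rfl
      have := (hFkey a 𝔭 0).mp h0
      simpa using this
    have hnil : IsNilpotent a := by
      rw [nilpotent_iff_mem_prime]
      intro I hI
      exact hmem ⟨I, hI⟩
    obtain ⟨n, hn⟩ := hnil
    have hpn : n ≤ p ^ n := Nat.le_of_lt (Nat.lt_pow_self hp1 : n < p ^ n)
    have ha2 : a = a ^ (p ^ n - n) * a ^ n := by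
      rw [← pow_add, Nat.sub_add_cancel hpn, myPowIter p hA]
    rw [hn, mul_zero] at ha2
    exact ha2
  have hsurj : Function.Surjective Φ₀ := by
    intro f
    have hclopen : ∀ c : ZMod p, IsClopen (f ⁻¹' {c}) :=
      fun c => (isClopen_discrete {c}).preimage f.continuous
    choose e he hbasic using fun c : ZMod p =>
      PrimeSpectrum.exists_idempotent_basicOpen_eq_of_isClopen (hclopen c)
    refine ⟨∑ c : ZMod p, algebraMap (ZMod p) A c * e c, ?_⟩
    ext 𝔭
    rw [hΦ₀, hFkey]
    haveI : 𝔭.asIdeal.IsPrime := 𝔭.isPrime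
    have hmk : ∀ c : ZMod p,
        Ideal.Quotient.mk 𝔭.asIdeal (e c) = if c = f 𝔭 then 1 else 0 := by
      intro c
      by_cases hc : c = f 𝔭
      · subst hc
        rw [if_pos rfl]
        have hne : e (f 𝔭) ∉ 𝔭.asIdeal := by
          have hmem : 𝔭 ∈ (PrimeSpectrum.basicOpen (e (f 𝔭)) : Set (PrimeSpectrum A)) := by
            rw [← hbasic]; exact rfl
          simpa [PrimeSpectrum.mem_basicOpen] using hmem
        have h0 : Ideal.Quotient.mk 𝔭.asIdeal (e (f 𝔭)) *
            (Ideal.Quotient.mk 𝔭.asIdeal (e (f 𝔭)) - 1) = 0 := by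
          rw [mul_sub, mul_one, ← map_mul, (he (f 𝔭)).eq, sub_self]
        rcases mul_eq_zero.mp h0 with h' | h'
        · exact absurd (Ideal.Quotient.eq_zero_iff_mem.mp h') hne
        · have := sub_eq_zero.mp h'
          exact this
      · rw [if_neg hc]
        apply Ideal.Quotient.eq_zero_iff_mem.mpr
        by_contra hne
        have hmem : 𝔭 ∈ (PrimeSpectrum.basicOpen (e c) : Set (PrimeSpectrum A)) := by
          simpa [PrimeSpectrum.mem_basicOpen] using hne
        rw [← hbasic] at hmem
        exact hc hmem.symm
    have hsum : Ideal.Quotient.mk 𝔭.asIdeal (∑ c : ZMod p, algebraMap (ZMod p) A c * e c)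
        = Ideal.Quotient.mk 𝔭.asIdeal (algebraMap (ZMod p) A (f 𝔭)) := by
      rw [map_sum, Finset.sum_eq_single (f 𝔭)]
      · rw [map_mul, hmk, if_pos rfl, mul_one]
      · intro c _ hc
        rw [map_mul, hmk, if_neg hc, mul_zero]
      · intro h; exact absurd (Finset.mem_univ _) h
    rw [← Ideal.Quotient.eq_zero_iff_mem, map_sub, hsum, sub_self]
  refine ⟨AlgEquiv.ofBijective Φ₀ ⟨hinj, hsurj⟩, ?_⟩
  intro a 𝔭
  show algebraMap (ZMod p) (A ⧸ 𝔭.asIdeal) (F a 𝔭) = _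
  rw [← hψa, RingEquiv.apply_symm_apply]
end

section
/- Let p be a prime and let B be the free p-Boolean algebra on countably many generators, i.e. the quotient of the multivariate polynomial algebra 𝔽_p[x_i : i ∈ ℕ] = MvPolynomial ℕ (ZMod p) by the ideal generated by all elements x_i^p − x_i (i ∈ ℕ). Then B is not set-like: there is no set S such that B is isomorphic as an 𝔽_p-algebra to the algebra of all functions S → 𝔽_p with pointwise operations. (Asserted in Appendix C.4 of the paper.) -/
open MvPolynomial

lemma not_countable_set_of_infinite (S : Type*) [Infinite S] : ¬ Countable (Set S) := by
  intro h
  obtain ⟨f, hf⟩ := h.exists_injective_nat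
  have hg := (Infinite.natEmbedding S).injective
  exact Function.cantor_injective ((Infinite.natEmbedding S) ∘ f) (hg.comp hf)

/-- Let `p` be a prime and let `B` be the free p-Boolean algebra on
countably many generators, i.e. the quotient of `𝔽_p[x_i : i ∈ ℕ]` by the ideal generated
by all `x_i^p − x_i`. Then `B` is not set-like: there is no set `S` such that `B` is
isomorphic as an `𝔽_p`-algebra to the algebra of all functions `S → 𝔽_p` with pointwise
operations. -/
theorem free_pBoolean_not_setlike (p : ℕ) [Fact p.Prime] (S : Type*) :
    IsEmpty ((MvPolynomial ℕ (ZMod p) ⧸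
        Ideal.span {f : MvPolynomial ℕ (ZMod p) |
          ∃ i : ℕ, f = MvPolynomial.X i ^ p - MvPolynomial.X i})
      ≃ₐ[ZMod p] (S → ZMod p)) := by
  constructor
  intro e
  set I : Ideal (MvPolynomial ℕ (ZMod p)) := Ideal.span {f : MvPolynomial ℕ (ZMod p) |
          ∃ i : ℕ, f = MvPolynomial.X i ^ p - MvPolynomial.X i} with hI
  -- The quotient is countable
  have hcount : Countable (MvPolynomial ℕ (ZMod p)) :=
    Countable.of_equiv _ (AddMonoidAlgebra.coeffEquiv (R := ZMod p) (M := ℕ →₀ ℕ)).symm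
  have hBcount : Countable (MvPolynomial ℕ (ZMod p) ⧸ I) :=
    (Ideal.Quotient.mk_surjective (I := I)).countable
  -- The quotient is infinite: evaluation homomorphism separates the generators
  have hzero : ∀ a ∈ I, (Pi.algHom (R := ZMod p)
      (A := fun _ : (ℕ → ZMod p) => ZMod p) (fun x => aeval x)) a = 0 := by
    intro a ha
    refine Submodule.span_induction ?_ ?_ ?_ ?_ ha
    · rintro f ⟨i, rfl⟩
      funext x
      simp [ZMod.pow_card]
    · simp
    · intro f g _ _ hf hg; rw [map_add, hf, hg, add_zero]
    · intro c f _ hf; rw [smul_eq_mul, map_mul, hf, mul_zero]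
  let φ : (MvPolynomial ℕ (ZMod p) ⧸ I) →ₐ[ZMod p] ((ℕ → ZMod p) → ZMod p) :=
    Ideal.Quotient.liftₐ I _ hzero
  have hinj : Function.Injective
      (fun i : ℕ => φ (Ideal.Quotient.mk I (MvPolynomial.X i))) := by
    intro i j hij
    by_contra hne
    have := congrFun hij (Pi.single i 1)
    have h2 : ∀ k, φ (Ideal.Quotient.mk I (MvPolynomial.X k)) (Pi.single i 1) = Pi.single (M := fun _ => ZMod p) i 1 k := by
      intro k
      change aeval (Pi.single (M := fun _ => ZMod p) i 1) (MvPolynomial.X k) = _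
      simp
    simp [h2, Pi.single_apply, hne, Ne.symm hne] at this
  have hBinf : Infinite (MvPolynomial ℕ (ZMod p) ⧸ I) := by
    refine Infinite.of_injective (fun i : ℕ => Ideal.Quotient.mk I (MvPolynomial.X i)) ?_
    intro i j hij
    exact hinj (by simp [hij])
  -- Transfer along the isomorphism
  have hFcount : Countable (S → ZMod p) := Countable.of_equiv _ e.toEquiv
  have hFinf : Infinite (S → ZMod p) := Infinite.of_injective e e.injective
  -- S must be infinite
  have hSinf : Infinite S := by
    by_contra hfin
    rw [not_infinite_iff_finite] at hfin
    exact (@Finite.not_infinite (S → ZMod p) inferInstance) hFinf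
  -- But then Set S embeds in S → ZMod p, contradicting Cantor
  classical
  have hsetinj : Function.Injective
      (fun A : Set S => fun s => if s ∈ A then (1 : ZMod p) else 0) := by
    intro A B hAB
    ext s
    have h := congrFun hAB s
    by_cases hA : s ∈ A <;> by_cases hB : s ∈ B <;> simp [hA, hB] at h ⊢
  exact not_countable_set_of_infinite S hsetinj.countable
end

section
/- Let F be a field and n ≥ 0. Let f : A → C and u : B → C be morphisms of ℕ-indexed cochain complexes of F-vector spaces such that each component f^s : A^s → C^s is surjective. Let E be the degreewise pullback of f and u (so E^s = B^s ×_{C^s} A^s) and let g : E → B be the projection. If the induced map H^s(f) on cohomology is an isomorphism for all s < n and injective for s = n, then H^s(g) is an isomorphism for all s < n and injective for s = n. (This is Lemma 4.17 of the paper — a homotopy pullback of an n-connected map is n-connected — in the case of the category cVec of cosimplicial F-vector spaces, translated through the Dold–Kan correspondence into cochain complexes; in this model structure the fibrations are the degreewise surjections and a map is cosimplicially n-connected if it induces isomorphisms on cohomotopy/cohomology in degrees below n and a monomorphism in degree n.) -/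
open CategoryTheory CategoryTheory.Limits HomologicalComplex

namespace ConnPBAux

variable {F : Type*} [Field F] {A B C E : CochainComplex (ModuleCat F) ℕ}

variable (f : A ⟶ C)

/-- The degreewise kernel complex of `f`. -/
noncomputable def K : CochainComplex (ModuleCat F) ℕ where
  X s := ModuleCat.of F (LinearMap.ker (f.f s).hom)
  d i j := ModuleCat.ofHom ((A.d i j).hom.restrict (p := LinearMap.ker (f.f i).hom)
    (q := LinearMap.ker (f.f j).hom) (fun x hx => by
      simp only [LinearMap.mem_ker] at hx ⊢
      have h1 : (A.d i j ≫ f.f j) x = (f.f i ≫ C.d i j) x := by rw [f.comm i j]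
      show f.f j (A.d i j x) = 0
      rw [show f.f j (A.d i j x) = (A.d i j ≫ f.f j) x from rfl, h1]
      show C.d i j (f.f i x) = 0
      rw [hx, map_zero]))
  shape i j hij := by
    ext x
    show A.d i j x.1 = _
    rw [A.shape i j hij]
    rfl
  d_comp_d' i j k _ _ := by
    ext x
    show A.d j k (A.d i j x.1) = _
    rw [show A.d j k (A.d i j x.1) = (A.d i j ≫ A.d j k) x.1 from rfl, A.d_comp_d]
    rfl

/-- The inclusion of the kernel complex. -/
noncomputable def ι : K f ⟶ A where
  f s := ModuleCat.ofHom (LinearMap.ker (f.f s).hom).subtype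
  comm' i j _ := by ext x; rfl

lemma ι_f_comp_f (s : ℕ) : (ι f).f s ≫ f.f s = 0 := by
  ext x
  exact x.2

lemma ι_comp_f : ι f ≫ f = 0 := by
  apply HomologicalComplex.hom_ext
  intro s
  exact ι_f_comp_f f s

instance ι_mono (s : ℕ) : Mono ((ι f).f s) :=
  (ModuleCat.mono_iff_injective _).2 Subtype.val_injective

/-- The short exact sequence `K → A → C`. -/
noncomputable def SA : ShortComplex (CochainComplex (ModuleCat F) ℕ) :=
  ShortComplex.mk (ι f) f (ι_comp_f f)

lemma SA_shortExact (hsurj : ∀ s : ℕ, Function.Surjective (f.f s)) :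
    (SA f).ShortExact := by
  apply HomologicalComplex.shortExact_of_degreewise_shortExact
  intro i
  exact
    { exact := by
        rw [ShortComplex.moduleCat_exact_iff]
        intro x hx
        exact ⟨⟨x, hx⟩, rfl⟩
      mono_f := ι_mono f i
      epi_g := (ModuleCat.epi_iff_surjective _).2 (hsurj i) }

variable (u : B ⟶ C) (h : E ⟶ A) (g : E ⟶ B)
variable (hpb : ∀ s : ℕ, IsPullback (h.f s) (g.f s) (f.f s) (u.f s))

/-- The lift of the kernel inclusion to the pullback. -/
noncomputable def ι' : K f ⟶ E where
  f s := (hpb s).lift ((ι f).f s) 0 (by rw [ι_f_comp_f, zero_comp])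
  comm' i j _ := by
    apply (hpb j).hom_ext
    · rw [Category.assoc, Category.assoc, (hpb j).lift_fst, ← h.comm i j,
        ← Category.assoc, (hpb i).lift_fst, (ι f).comm i j]
    · rw [Category.assoc, Category.assoc, (hpb j).lift_snd, comp_zero, ← g.comm i j,
        ← Category.assoc, (hpb i).lift_snd, zero_comp]

lemma ι'_f_comp_h (s : ℕ) : (ι' f u h g hpb).f s ≫ h.f s = (ι f).f s := (hpb s).lift_fst _ _ _

lemma ι'_f_comp_g (s : ℕ) : (ι' f u h g hpb).f s ≫ g.f s = 0 := (hpb s).lift_snd _ _ _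

instance ι'_mono (s : ℕ) : Mono ((ι' f u h g hpb).f s) := by
  have : Mono ((ι' f u h g hpb).f s ≫ h.f s) := by
    rw [ι'_f_comp_h]
    infer_instance
  exact mono_of_mono _ (h.f s)

/-- The short exact sequence `K → E → B`. -/
noncomputable def SE : ShortComplex (CochainComplex (ModuleCat F) ℕ) :=
  ShortComplex.mk (ι' f u h g hpb) g (by
    apply HomologicalComplex.hom_ext
    intro s
    exact ι'_f_comp_g f u h g hpb s)

lemma SE_shortExact (hsurj : ∀ s : ℕ, Function.Surjective (f.f s)) :
    (SE f u h g hpb).ShortExact := by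
  apply HomologicalComplex.shortExact_of_degreewise_shortExact
  intro s
  haveI : Epi (f.f s) := (ModuleCat.epi_iff_surjective _).2 (hsurj s)
  have hrw : (SE f u h g hpb).map (HomologicalComplex.eval (ModuleCat F) (ComplexShape.up ℕ) s)
      = ShortComplex.mk ((ι' f u h g hpb).f s) (g.f s) (ι'_f_comp_g f u h g hpb s) := rfl
  rw [hrw]
  refine
    { exact := ?_
      mono_f := ι'_mono f u h g hpb s
      epi_g := ?_ }
  · apply ShortComplex.exact_of_f_is_kernel
    refine KernelFork.IsLimit.ofι _ _
      (fun {W} t ht => (ConcreteCategory.ofHom (C := ModuleCat F) (X := W) (Y := (K f).X s) (LinearMap.codRestrict (LinearMap.ker (f.f s).hom)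
        (t ≫ h.f s).hom (fun x => by
          have h1 : f.f s (h.f s (t x)) = u.f s (g.f s (t x)) := by
            rw [show f.f s (h.f s (t x)) = (h.f s ≫ f.f s) (t x) from rfl, (hpb s).w]
            rfl
          have h2 : g.f s (t x) = 0 := by
            rw [show g.f s (t x) = (t ≫ g.f s) x from rfl, ht]
            rfl
          simp only [LinearMap.mem_ker]
          show f.f s (h.f s (t x)) = 0
          rw [h1, h2, map_zero])) : W ⟶ (K f).X s)) ?_ ?_
    · intro W t ht
      apply (hpb s).hom_ext
      · rw [Category.assoc, ι'_f_comp_h]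
        ext x
        rfl
      · rw [Category.assoc, ι'_f_comp_g, comp_zero, ht]
    · intro W t ht m hm
      rw [← cancel_mono ((ι' f u h g hpb).f s)]
      rw [hm]
      apply (hpb s).hom_ext
      · rw [Category.assoc, ι'_f_comp_h]
        ext x
        rfl
      · rw [Category.assoc, ι'_f_comp_g, comp_zero, ht]
  · show Epi (g.f s)
    have h1 : (hpb s).isoPullback.hom ≫ pullback.snd (f.f s) (u.f s) = g.f s :=
      (hpb s).isoPullback_hom_snd
    rw [← h1]
    haveI : Epi (pullback.snd (f.f s) (u.f s)) := Abelian.epi_pullback_of_epi_f _ _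
    exact epi_comp _ _

lemma isZero_K_homology {n : ℕ}
    (hsurj : ∀ s : ℕ, Function.Surjective (f.f s))
    (hiso : ∀ s < n, IsIso (HomologicalComplex.homologyMap f s))
    (hmono : Mono (HomologicalComplex.homologyMap f n)) :
    ∀ s ≤ n, IsZero ((K f).homology s) := by
  have hSA := SA_shortExact f hsurj
  intro s hs
  -- `H^s(ι)` is a monomorphism
  have hm : Mono (HomologicalComplex.homologyMap (ι f) s) := by
    obtain _ | t := s
    · exact mono_homologyMap_of_mono_of_not_rel (ι f) 0 (fun i hi => by
        simp [ComplexShape.up] at hi)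
    · -- use the connecting map
      have e3 := hSA.homology_exact₃ t (t + 1) rfl
      haveI : IsIso (HomologicalComplex.homologyMap f t) := hiso t (lt_of_lt_of_le (Nat.lt_succ_self t) hs)
      have hepi : Epi (HomologicalComplex.homologyMap f t) := inferInstance
      have hδ : hSA.δ t (t + 1) rfl = 0 := e3.epi_f_iff.1 hepi
      have e1 := hSA.homology_exact₁ t (t + 1) rfl
      have : Mono (HomologicalComplex.homologyMap (ι f) (t + 1)) := e1.mono_g hδ
      exact this
  -- `H^s(ι) = 0`
  have hMf : Mono (HomologicalComplex.homologyMap f s) := by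
    rcases lt_or_eq_of_le hs with hlt | rfl
    · haveI := hiso s hlt
      infer_instance
    · exact hmono
  have e2 := hSA.homology_exact₂ s
  have hz : HomologicalComplex.homologyMap (ι f) s = 0 := e2.mono_g_iff.1 hMf
  rw [IsZero.iff_id_eq_zero, ← cancel_mono (HomologicalComplex.homologyMap (ι f) s),
    hz, comp_zero, comp_zero]

end ConnPBAux

open CategoryTheory

/-- **homotopy pullbacks of n-connected maps in cosimplicial vector
spaces, via Dold–Kan.** Let `F` be a field and `n ≥ 0`. Let `f : A → C` and `u : B → C`
be morphisms of `ℕ`-indexed cochain complexes of `F`-vector spaces with each component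
`fˢ : Aˢ → Cˢ` surjective. Let `E` be the degreewise pullback of `f` and `u`
(with projections `h : E → A` and `g : E → B`). If `Hˢ(f)` is an isomorphism for all
`s < n` and injective for `s = n`, then `Hˢ(g)` is an isomorphism for all `s < n` and
injective for `s = n`. -/
theorem connected_pullback_of_cochain_complexes (F : Type*) [Field F] (n : ℕ)
    (A B C E : CochainComplex (ModuleCat F) ℕ)
    (f : A ⟶ C) (u : B ⟶ C) (h : E ⟶ A) (g : E ⟶ B)
    (hsurj : ∀ s : ℕ, Function.Surjective (f.f s))
    (hpb : ∀ s : ℕ, IsPullback (h.f s) (g.f s) (f.f s) (u.f s))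
    (hiso : ∀ s < n, IsIso (HomologicalComplex.homologyMap f s))
    (hmono : Mono (HomologicalComplex.homologyMap f n)) :
    (∀ s < n, IsIso (HomologicalComplex.homologyMap g s)) ∧
      Mono (HomologicalComplex.homologyMap g n) := by
  have hK := ConnPBAux.isZero_K_homology f hsurj hiso hmono
  have hSE := ConnPBAux.SE_shortExact f u h g hpb hsurj
  have hmonoG : ∀ s ≤ n, Mono (HomologicalComplex.homologyMap g s) := by
    intro s hs
    have e2 := hSE.homology_exact₂ s
    exact e2.mono_g ((hK s hs).eq_of_src _ _)
  refine ⟨fun s hs => ?_, hmonoG n le_rfl⟩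
  have e3 := hSE.homology_exact₃ s (s + 1) rfl
  have hδ : hSE.δ s (s + 1) rfl = 0 := (hK (s + 1) hs).eq_of_tgt _ _
  haveI : Epi (HomologicalComplex.homologyMap g s) := e3.epi_f hδ
  haveI := hmonoG s (le_of_lt hs)
  exact isIso_of_mono_of_epi _
end
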